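/- For the 3-dimensional Lauricella structure with Jordan blocks of sizes 2+1 (coordinates u^1,u^2,u^3 with u^2≠0 and u^1≠u^3), the connection with nonzero Christoffel symbols Γ^2_{22} = −2ε₁/u^2, Γ^1_{13} = Γ^2_{23} = −Γ^1_{11} = −Γ^1_{33} = −Γ^2_{12} = ε₃/(u^1−u^3), Γ^3_{11} = Γ^3_{33} = −Γ^3_{13} = 2ε₁/(u^1−u^3), Γ^2_{11} = Γ^2_{33} = −Γ^2_{13} = ε₃u^2/(u^1−u^3)² (and symmetric in lower indices) is flat, i.e. R^k_{ijl} = 0 for all indices. -/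

import Mathlib

/-- Partial derivative of `f` with respect to the `i`-th coordinate at `x`
(coordinates are 0-based: `u^1 = x 0`, `u^2 = x 1`, `u^3 = x 2`). -/
noncomputable def pd (i : Fin 3) (f : (Fin 3 → ℝ) → ℝ) (x : Fin 3 → ℝ) : ℝ :=
  deriv (fun t => f (Function.update x i t)) (x i)

lemma pd_neg (i : Fin 3) (f : (Fin 3 → ℝ) → ℝ) (x : Fin 3 → ℝ) :
    pd i (fun y => -(f y)) x = -pd i f x := by
  simp [pd, deriv.neg]

lemma pd_const (i : Fin 3) (c : ℝ) (x : Fin 3 → ℝ) :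
    pd i (fun _ => c) x = 0 := by simp [pd]

-- shape A: c / (y 0 - y 2)
lemma pdA0 (c : ℝ) (x : Fin 3 → ℝ) (h : x 0 - x 2 ≠ 0) :
    pd 0 (fun y => c / (y 0 - y 2)) x = -(c / (x 0 - x 2)^2) := by
  have h1 : HasDerivAt (fun t : ℝ => c / (t - x 2))
      ((0 * (x 0 - x 2) - c * 1) / (x 0 - x 2)^2) (x 0) :=
    (hasDerivAt_const _ c).div ((hasDerivAt_id (x 0)).sub_const (x 2)) h
  simp only [pd, Function.update]
  norm_num [Fin.ext_iff]
  rw [h1.deriv]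
  field_simp
  ring
lemma pdA1 (c : ℝ) (x : Fin 3 → ℝ) :
    pd 1 (fun y => c / (y 0 - y 2)) x = 0 := by
  simp only [pd, Function.update]
  norm_num [Fin.ext_iff]
lemma pdA2 (c : ℝ) (x : Fin 3 → ℝ) (h : x 0 - x 2 ≠ 0) :
    pd 2 (fun y => c / (y 0 - y 2)) x = c / (x 0 - x 2)^2 := by
  have h1 : HasDerivAt (fun t : ℝ => c / (x 0 - t))
      ((0 * (x 0 - x 2) - c * (0 - 1)) / (x 0 - x 2)^2) (x 2) :=
    (hasDerivAt_const _ c).div ((hasDerivAt_const (x 2) (x 0)).sub (hasDerivAt_id (x 2))) h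
  simp only [pd, Function.update]
  norm_num [Fin.ext_iff]
  rw [h1.deriv]
  field_simp
  ring

-- shape B: c * y 1 / (y 0 - y 2)^2
lemma pdB0 (c : ℝ) (x : Fin 3 → ℝ) (h : x 0 - x 2 ≠ 0) :
    pd 0 (fun y => c * y 1 / (y 0 - y 2)^2) x = -(2 * c * x 1 / (x 0 - x 2)^3) := by
  have h2 : HasDerivAt (fun t : ℝ => (t - x 2)^2)
      (2 * (x 0 - x 2) ^ 1 * 1) (x 0) := ((hasDerivAt_id (x 0)).sub_const (x 2)).pow 2
  have h1 : HasDerivAt (fun t : ℝ => c * x 1 / (t - x 2)^2)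
      ((0 * (x 0 - x 2)^2 - c * x 1 * (2 * (x 0 - x 2) ^ 1 * 1)) / ((x 0 - x 2)^2)^2) (x 0) :=
    (hasDerivAt_const _ (c * x 1)).div h2 (pow_ne_zero 2 h)
  simp only [pd, Function.update]
  norm_num [Fin.ext_iff]
  rw [h1.deriv]
  field_simp
  ring
lemma pdB1 (c : ℝ) (x : Fin 3 → ℝ) :
    pd 1 (fun y => c * y 1 / (y 0 - y 2)^2) x = c / (x 0 - x 2)^2 := by
  have h1 : HasDerivAt (fun t : ℝ => c * t / (x 0 - x 2)^2)
      (c / (x 0 - x 2)^2) (x 1) := by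
    have := ((hasDerivAt_id (x 1)).const_mul c).div_const ((x 0 - x 2)^2)
    simpa using this
  simp only [pd, Function.update]
  norm_num [Fin.ext_iff]
lemma pdB2 (c : ℝ) (x : Fin 3 → ℝ) (h : x 0 - x 2 ≠ 0) :
    pd 2 (fun y => c * y 1 / (y 0 - y 2)^2) x = 2 * c * x 1 / (x 0 - x 2)^3 := by
  have h2 : HasDerivAt (fun t : ℝ => (x 0 - t)^2)
      (2 * (x 0 - x 2) ^ 1 * (0 - 1)) (x 2) :=
    (((hasDerivAt_const (x 2) (x 0)).sub (hasDerivAt_id (x 2)))).pow 2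
  have h1 : HasDerivAt (fun t : ℝ => c * x 1 / (x 0 - t)^2)
      ((0 * (x 0 - x 2)^2 - c * x 1 * (2 * (x 0 - x 2) ^ 1 * (0 - 1))) / ((x 0 - x 2)^2)^2) (x 2) :=
    (hasDerivAt_const _ (c * x 1)).div h2 (pow_ne_zero 2 h)
  simp only [pd, Function.update]
  norm_num [Fin.ext_iff]
  rw [h1.deriv]
  field_simp
  ring

-- shape C: c / y 1
lemma pdC0 (c : ℝ) (x : Fin 3 → ℝ) :
    pd 0 (fun y => c / y 1) x = 0 := by
  simp only [pd, Function.update]; norm_num [Fin.ext_iff]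
lemma pdC2 (c : ℝ) (x : Fin 3 → ℝ) :
    pd 2 (fun y => c / y 1) x = 0 := by
  simp only [pd, Function.update]; norm_num [Fin.ext_iff]
lemma pdC1 (c : ℝ) (x : Fin 3 → ℝ) (h : x 1 ≠ 0) :
    pd 1 (fun y => c / y 1) x = -(c / (x 1)^2) := by
  have h1 : HasDerivAt (fun t : ℝ => c / t)
      ((0 * x 1 - c * 1) / (x 1)^2) (x 1) :=
    (hasDerivAt_const _ c).div (hasDerivAt_id (x 1)) h
  simp only [pd, Function.update]
  norm_num [Fin.ext_iff]
  rw [neg_div]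

set_option maxHeartbeats 1600000 in
/-- The 3-dimensional Lauricella connection for Jordan blocks of sizes
`2+1` (Section 6.2.2), with the listed nonzero Christoffel symbols, is flat on
`{u² ≠ 0, u¹ ≠ u³}`: its Riemann tensor `R^k_{ijl}` vanishes identically there. -/
theorem statement14 (ε₁ ε₃ : ℝ)
    (Γ : Fin 3 → Fin 3 → Fin 3 → (Fin 3 → ℝ) → ℝ)
    (hsym : ∀ k i j, Γ k i j = Γ k j i)
    -- Γ^1_{..}
    (h000 : ∀ x, Γ 0 0 0 x = -(ε₃ / (x 0 - x 2)))
    (h001 : ∀ x, Γ 0 0 1 x = 0)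
    (h002 : ∀ x, Γ 0 0 2 x = ε₃ / (x 0 - x 2))
    (h011 : ∀ x, Γ 0 1 1 x = 0)
    (h012 : ∀ x, Γ 0 1 2 x = 0)
    (h022 : ∀ x, Γ 0 2 2 x = -(ε₃ / (x 0 - x 2)))
    -- Γ^2_{..}
    (h100 : ∀ x, Γ 1 0 0 x = ε₃ * x 1 / (x 0 - x 2) ^ 2)
    (h101 : ∀ x, Γ 1 0 1 x = -(ε₃ / (x 0 - x 2)))
    (h102 : ∀ x, Γ 1 0 2 x = -(ε₃ * x 1 / (x 0 - x 2) ^ 2))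
    (h111 : ∀ x, Γ 1 1 1 x = -(2 * ε₁ / x 1))
    (h112 : ∀ x, Γ 1 1 2 x = ε₃ / (x 0 - x 2))
    (h122 : ∀ x, Γ 1 2 2 x = ε₃ * x 1 / (x 0 - x 2) ^ 2)
    -- Γ^3_{..}
    (h200 : ∀ x, Γ 2 0 0 x = 2 * ε₁ / (x 0 - x 2))
    (h201 : ∀ x, Γ 2 0 1 x = 0)
    (h202 : ∀ x, Γ 2 0 2 x = -(2 * ε₁ / (x 0 - x 2)))
    (h211 : ∀ x, Γ 2 1 1 x = 0)
    (h212 : ∀ x, Γ 2 1 2 x = 0)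
    (h222 : ∀ x, Γ 2 2 2 x = 2 * ε₁ / (x 0 - x 2)) :
    ∀ x : Fin 3 → ℝ, x 1 ≠ 0 → x 0 ≠ x 2 →
      ∀ k i j l : Fin 3,
        pd j (fun y => Γ k i l y) x - pd i (fun y => Γ k j l y) x
          + (∑ s : Fin 3, Γ k j s x * Γ s i l x)
          - (∑ s : Fin 3, Γ k i s x * Γ s j l x) = 0 := by
  intro x hb hac k i j l
  have hd : x 0 - x 2 ≠ 0 := sub_ne_zero.mpr hac
  have h010 : ∀ y, Γ 0 1 0 y = 0 := fun y => by rw [hsym]; exact h001 y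
  have h020 : ∀ y, Γ 0 2 0 y = ε₃ / (y 0 - y 2) := fun y => by rw [hsym]; exact h002 y
  have h021 : ∀ y, Γ 0 2 1 y = 0 := fun y => by rw [hsym]; exact h012 y
  have h110 : ∀ y, Γ 1 1 0 y = -(ε₃ / (y 0 - y 2)) := fun y => by rw [hsym]; exact h101 y
  have h120 : ∀ y, Γ 1 2 0 y = -(ε₃ * y 1 / (y 0 - y 2) ^ 2) := fun y => by rw [hsym]; exact h102 y
  have h121 : ∀ y, Γ 1 2 1 y = ε₃ / (y 0 - y 2) := fun y => by rw [hsym]; exact h112 y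
  have h210 : ∀ y, Γ 2 1 0 y = 0 := fun y => by rw [hsym]; exact h201 y
  have h220 : ∀ y, Γ 2 2 0 y = -(2 * ε₁ / (y 0 - y 2)) := fun y => by rw [hsym]; exact h202 y
  have h221 : ∀ y, Γ 2 2 1 y = 0 := fun y => by rw [hsym]; exact h212 y
  have tri : ∀ m : Fin 3, m = 0 ∨ m = 1 ∨ m = 2 := by decide
  rcases tri k with rfl | rfl | rfl <;> rcases tri i with rfl | rfl | rfl <;>
    rcases tri j with rfl | rfl | rfl <;> rcases tri l with rfl | rfl | rfl <;>
    simp only [Fin.sum_univ_three, Fin.isValue,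
      h000, h001, h002, h011, h012, h022, h100, h101, h102, h111, h112, h122,
      h200, h201, h202, h211, h212, h222,
      h010, h020, h021, h110, h120, h121, h210, h220, h221] <;>
    (try simp only [pd_neg, pd_const, pdA0 _ _ hd, pdA1, pdA2 _ _ hd,
      pdB0 _ _ hd, pdB1, pdB2 _ _ hd, pdC0, pdC1 _ _ hb, pdC2]) <;>
    (try field_simp) <;> (try ring) <;> (try norm_num)
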